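/- Fix n ≥ 2 and p > 0. For each natural K, let a k = 10^(-2K) and b k = 10^(-K) for k < n-1, and a (n-1) = b (n-1) = 1. Then as K → ∞, both ((∑ k, (a k)^p)/(∑ k, (b k)^p))^(1/p) and ∑ k, (a k)/(b k) = (n-1)·10^(-K) + 1 tend to 1. -/

import Mathlib

open Filter

lemma sum_aux_16 (n : ℕ) (hn : 1 ≤ n) (c : ℝ) :
    ∑ k : Fin n, (if (k : ℕ) < n - 1 then c else 1) = (n - 1 : ℝ) * c + 1 := by
  obtain ⟨m, rfl⟩ := Nat.exists_eq_add_of_le hn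
  rw [Nat.add_comm] at *
  rw [Fin.sum_univ_eq_sum_range (fun k => if k < m + 1 - 1 then c else (1:ℝ))]
  simp only [Nat.add_sub_cancel]
  rw [Finset.sum_range_succ, if_neg (lt_irrefl m),
    Finset.sum_congr rfl (fun k hk => if_pos (Finset.mem_range.mp hk))]
  simp [Finset.sum_const]

lemma tend_aux_16 (c : ℝ) (hc : 0 < c) :
    Tendsto (fun K : ℕ => (10 : ℝ) ^ (-(c * K))) atTop (nhds 0) := by
  have h : ∀ K : ℕ, (10 : ℝ) ^ (-(c * K)) = ((10 : ℝ) ^ (-c)) ^ K := by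
    intro K
    rw [← Real.rpow_natCast ((10:ℝ) ^ (-c)) K, ← Real.rpow_mul (by norm_num)]
    ring_nf
  simp only [h]
  exact tendsto_pow_atTop_nhds_zero_of_lt_one (Real.rpow_nonneg (by norm_num) _)
    (Real.rpow_lt_one_of_one_lt_of_neg (by norm_num) (by linarith))

theorem stmt_16 (n : ℕ) (hn : 2 ≤ n) (p : ℝ) (hp : 0 < p)
    (a b : ℕ → Fin n → ℝ)
    (hadef : ∀ K, ∀ k : Fin n,
      a K k = if (k : ℕ) < n - 1 then (10 : ℝ) ^ (-(2 * K : ℝ)) else 1)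
    (hbdef : ∀ K, ∀ k : Fin n,
      b K k = if (k : ℕ) < n - 1 then (10 : ℝ) ^ (-(K : ℝ)) else 1) :
    Filter.Tendsto
      (fun K : ℕ => ((∑ k, (a K k) ^ p) / (∑ k, (b K k) ^ p)) ^ (1 / p))
      Filter.atTop (nhds 1) ∧
    Filter.Tendsto (fun K : ℕ => ∑ k, a K k / b K k) Filter.atTop (nhds 1) ∧
    ∀ K : ℕ, ∑ k, a K k / b K k = (n - 1 : ℝ) * (10 : ℝ) ^ (-(K : ℝ)) + 1 := by
  have h10 : (0:ℝ) < 10 := by norm_num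
  have hn1 : 1 ≤ n := by omega
  have hsum_a : ∀ K : ℕ, ∑ k, (a K k) ^ p = (n - 1 : ℝ) * (10 : ℝ) ^ (-(2 * p * K)) + 1 := by
    intro K
    have : ∀ k : Fin n, (a K k) ^ p
        = if (k : ℕ) < n - 1 then (10 : ℝ) ^ (-(2 * p * K)) else 1 := by
      intro k
      rw [hadef]
      split
      · rw [← Real.rpow_mul (le_of_lt h10)]
        ring_nf
      · exact Real.one_rpow p
    rw [Finset.sum_congr rfl (fun k _ => this k), sum_aux_16 n hn1]
  have hsum_b : ∀ K : ℕ, ∑ k, (b K k) ^ p = (n - 1 : ℝ) * (10 : ℝ) ^ (-(p * K)) + 1 := by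
    intro K
    have : ∀ k : Fin n, (b K k) ^ p
        = if (k : ℕ) < n - 1 then (10 : ℝ) ^ (-(p * K)) else 1 := by
      intro k
      rw [hbdef]
      split
      · rw [← Real.rpow_mul (le_of_lt h10)]
        ring_nf
      · exact Real.one_rpow p
    rw [Finset.sum_congr rfl (fun k _ => this k), sum_aux_16 n hn1]
  have h3 : ∀ K : ℕ, ∑ k, a K k / b K k = (n - 1 : ℝ) * (10 : ℝ) ^ (-(K : ℝ)) + 1 := by
    intro K
    have : ∀ k : Fin n, a K k / b K k
        = if (k : ℕ) < n - 1 then (10 : ℝ) ^ (-(K : ℝ)) else 1 := by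
      intro k
      rw [hadef, hbdef]
      split
      · rw [← Real.rpow_sub h10, show (-(2 * (K:ℝ))) - (-(K:ℝ)) = -(K:ℝ) by ring]
      · simp
    rw [Finset.sum_congr rfl (fun k _ => this k), sum_aux_16 n hn1]
  have ta : Tendsto (fun K : ℕ => ∑ k, (a K k) ^ p) atTop (nhds 1) := by
    simp only [hsum_a]
    have := ((tend_aux_16 (2 * p) (by positivity)).const_mul ((n:ℝ) - 1)).add_const 1
    simpa using this
  have tb : Tendsto (fun K : ℕ => ∑ k, (b K k) ^ p) atTop (nhds 1) := by
    simp only [hsum_b]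
    have := ((tend_aux_16 p hp).const_mul ((n:ℝ) - 1)).add_const 1
    simpa using this
  refine ⟨?_, ?_, h3⟩
  · have hdiv : Tendsto (fun K : ℕ => (∑ k, (a K k) ^ p) / (∑ k, (b K k) ^ p))
        atTop (nhds 1) := by
      have := ta.div tb one_ne_zero
      rw [div_one] at this
      exact this
    have := Filter.Tendsto.rpow_const (p := 1 / p) hdiv (Or.inr (by positivity))
    simpa using this
  · simp only [h3]
    have h1 := tend_aux_16 1 one_pos
    simp only [one_mul] at h1
    have := (h1.const_mul ((n:ℝ) - 1)).add_const 1
    simpa using this
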